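/- Let T : S × A × S → ℝ be a transition function and define the wrapped transition T'(s,a,s') = T(s,a,s') if C(s,a), and T'(s,a,s') = (1/|A_C(s)|)·∑_{a' ∈ A_C(s)} T(s,a',s') otherwise. For any policy π' on the wrapped environment and its redistributed safe counterpart π (as defined by moving the unsafe-action probability mass uniformly onto safe actions), the induced state-transition kernels agree: for all s, s', ∑_{a ∈ A} π(s)(a)·T(s,a,s') = ∑_{a ∈ A} π'(s)(a)·T'(s,a,s'). -/

import Mathlib

open Finset

theorem wrapped_transition_kernels_agree
    {S A : Type*} [Fintype A] [Nonempty A]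
    (C : S → A → Prop) [∀ s, DecidablePred (C s)]
    (hC : ∀ s, (univ.filter (C s)).Nonempty)
    (T : S → A → S → ℝ)
    (T' : S → A → S → ℝ)
    (hT' : ∀ s a s', T' s a s' =
      if C s a then T s a s'
      else (∑ a' ∈ univ.filter (C s), T s a' s') / (univ.filter (C s)).card)
    (π' : S → A → ℝ)
    (hnn : ∀ s a, 0 ≤ π' s a)
    (hsum : ∀ s, ∑ a, π' s a = 1)
    (π : S → A → ℝ)
    (hπ : ∀ s a, π s a =
      if C s a then
        π' s a + (∑ a' ∈ univ.filter (fun a' => ¬ C s a'), π' s a')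
                  / (univ.filter (C s)).card
      else 0) :
    ∀ s s', ∑ a, π s a * T s a s' = ∑ a, π' s a * T' s a s' := by
  intro s s'
  have hk : ((univ.filter (C s)).card : ℝ) ≠ 0 := by
    exact_mod_cast (hC s).card_pos.ne'
  rw [← Finset.sum_filter_add_sum_filter_not univ (C s) (fun a => π s a * T s a s'),
      ← Finset.sum_filter_add_sum_filter_not univ (C s) (fun a => π' s a * T' s a s')]
  have h1 : ∑ a ∈ univ.filter (C s), π s a * T s a s'
      = ∑ a ∈ univ.filter (C s),
        (π' s a + (∑ a' ∈ univ.filter (fun a' => ¬ C s a'), π' s a')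
          / (univ.filter (C s)).card) * T s a s' := by
    refine Finset.sum_congr rfl fun a ha => ?_
    rw [hπ, if_pos (Finset.mem_filter.mp ha).2]
  have h2 : ∑ a ∈ univ.filter (fun a => ¬ C s a), π s a * T s a s' = 0 := by
    refine Finset.sum_eq_zero fun a ha => ?_
    rw [hπ, if_neg (Finset.mem_filter.mp ha).2, zero_mul]
  have h3 : ∑ a ∈ univ.filter (C s), π' s a * T' s a s'
      = ∑ a ∈ univ.filter (C s), π' s a * T s a s' := by
    refine Finset.sum_congr rfl fun a ha => ?_
    rw [hT', if_pos (Finset.mem_filter.mp ha).2]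
  have h4 : ∑ a ∈ univ.filter (fun a => ¬ C s a), π' s a * T' s a s'
      = ∑ a ∈ univ.filter (fun a => ¬ C s a),
        π' s a * ((∑ a' ∈ univ.filter (C s), T s a' s') / (univ.filter (C s)).card) := by
    refine Finset.sum_congr rfl fun a ha => ?_
    rw [hT', if_neg (Finset.mem_filter.mp ha).2]
  rw [h1, h2, h3, h4, add_zero]
  simp only [add_mul, Finset.sum_add_distrib]
  rw [← Finset.mul_sum]
  ring_nf
  rw [← Finset.mul_sum]
  ring
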